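/- The improper integral A = ∫₀^{a₊} (1/(1−x))·√( x / (3(x+1)(a₊−x)(x−a₋)) ) dx converges and satisfies 3/50 ≤ A ≤ 3/10; in particular A < π·√(2/21). -/
import Mathlib


noncomputable section

def aplus : ℝ := -(1 / 2) + Real.sqrt 2 / 2
def aminus : ℝ := -(1 / 2) - Real.sqrt 2 / 2

lemma s2_lb : (1.414:ℝ) ≤ Real.sqrt 2 := by
  nlinarith [Real.sq_sqrt (by norm_num : (0:ℝ) ≤ 2), Real.sqrt_nonneg 2]

lemma s2_ub : Real.sqrt 2 ≤ 1.415 := by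
  nlinarith [Real.sq_sqrt (by norm_num : (0:ℝ) ≤ 2), Real.sqrt_nonneg 2]

lemma ap_lb : (0.207:ℝ) ≤ aplus := by unfold aplus; nlinarith [s2_lb]
lemma ap_ub : aplus ≤ 0.2075 := by unfold aplus; nlinarith [s2_ub]
lemma am_lb : (-1.2075:ℝ) ≤ aminus := by unfold aminus; nlinarith [s2_ub]
lemma am_ub : aminus ≤ -1.207 := by unfold aminus; nlinarith [s2_lb]

lemma sqrt_inv_rpow (y : ℝ) : Real.sqrt y⁻¹ = y ^ (-(1/2) : ℝ) := by
  rcases lt_trichotomy y 0 with h | h | h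
  · rw [Real.sqrt_eq_zero'.mpr (inv_nonpos.mpr h.le),
      Real.rpow_def_of_neg h]
    have : (-(1/2) : ℝ) * Real.pi = -(Real.pi / 2) := by ring
    rw [this, Real.cos_neg, Real.cos_pi_div_two, mul_zero]
  · subst h; rw [Real.zero_rpow (by norm_num)]; simp
  · rw [Real.rpow_neg h.le, ← Real.sqrt_eq_rpow, ← Real.sqrt_inv]

/-- The integrand `(1/(1-x))·√( x / (3(x+1)(a₊-x)(x-a₋)) )`. -/
def sepIntegrand (x : ℝ) : ℝ :=
  1 / (1 - x) * Real.sqrt (x / (3 * (x + 1) * (aplus - x) * (x - aminus)))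

lemma sep_factor {x : ℝ} (hx0 : 0 ≤ x) :
    sepIntegrand x = 1 / (1 - x) *
      (Real.sqrt (x / (3 * (x + 1) * (x - aminus))) * Real.sqrt ((aplus - x)⁻¹)) := by
  have hD : 0 < 3 * (x + 1) * (x - aminus) := by nlinarith [am_ub]
  unfold sepIntegrand
  have : x / (3 * (x + 1) * (aplus - x) * (x - aminus))
      = x / (3 * (x + 1) * (x - aminus)) * (aplus - x)⁻¹ := by
    rw [show 3 * (x + 1) * (aplus - x) * (x - aminus)
        = 3 * (x + 1) * (x - aminus) * (aplus - x) by ring, ← div_div,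
      div_eq_mul_inv (x / (3 * (x + 1) * (x - aminus)))]
  rw [this, Real.sqrt_mul (div_nonneg hx0 hD.le)]

lemma ptwise_up {x : ℝ} (hx : x ∈ Set.Icc (0:ℝ) aplus) :
    sepIntegrand x ≤ 0.32 * Real.sqrt ((aplus - x)⁻¹) := by
  obtain ⟨hx0, hxa⟩ := hx
  have hau := ap_ub
  have hD : (3.6:ℝ) ≤ 3 * (x + 1) * (x - aminus) := by nlinarith [am_ub, am_lb]
  have hDpos : (0:ℝ) < 3 * (x + 1) * (x - aminus) := by linarith
  have h1 : x / (3 * (x + 1) * (x - aminus)) ≤ 1/16 := by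
    rw [div_le_iff₀ hDpos]; nlinarith
  have h2 : Real.sqrt (x / (3 * (x + 1) * (x - aminus))) ≤ 0.25 := by
    nlinarith [Real.sq_sqrt (div_nonneg hx0 hDpos.le),
      Real.sqrt_nonneg (x / (3 * (x + 1) * (x - aminus)))]
  have h3 : 1 / (1 - x) ≤ 1.27 := by
    rw [div_le_iff₀ (by linarith)]; nlinarith
  have h4 : (0:ℝ) ≤ 1 / (1 - x) := div_nonneg zero_le_one (by linarith)
  have h5 := Real.sqrt_nonneg ((aplus - x)⁻¹)
  rw [sep_factor hx0]
  calc 1 / (1 - x) * (Real.sqrt (x / (3 * (x + 1) * (x - aminus))) * Real.sqrt ((aplus - x)⁻¹))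
      ≤ 1.27 * (0.25 * Real.sqrt ((aplus - x)⁻¹)) := by
        apply mul_le_mul h3 (mul_le_mul_of_nonneg_right h2 h5) (by positivity) (by norm_num)
    _ ≤ 0.32 * Real.sqrt ((aplus - x)⁻¹) := by nlinarith

lemma ptwise_lo {x : ℝ} (hx : x ∈ Set.Icc (1/10 : ℝ) aplus) :
    0.138 * Real.sqrt ((aplus - x)⁻¹) ≤ sepIntegrand x := by
  obtain ⟨hx1, hxa⟩ := hx
  have hx0 : (0:ℝ) ≤ x := by linarith
  have hau := ap_ub
  have hD' : 3 * (x + 1) * (x - aminus) ≤ 5.2 := by nlinarith [am_lb, am_ub]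
  have hDpos : (0:ℝ) < 3 * (x + 1) * (x - aminus) := by nlinarith [am_ub]
  have h1 : (0.138:ℝ)^2 ≤ x / (3 * (x + 1) * (x - aminus)) := by
    rw [le_div_iff₀ hDpos]; nlinarith
  have h2 : (0.138:ℝ) ≤ Real.sqrt (x / (3 * (x + 1) * (x - aminus))) := by
    nlinarith [Real.sq_sqrt (div_nonneg hx0 hDpos.le),
      Real.sqrt_nonneg (x / (3 * (x + 1) * (x - aminus)))]
  have h3 : (1:ℝ) ≤ 1 / (1 - x) := by
    rw [le_div_iff₀ (by linarith)]; linarith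
  have h5 := Real.sqrt_nonneg ((aplus - x)⁻¹)
  rw [sep_factor hx0]
  calc (0.138:ℝ) * Real.sqrt ((aplus - x)⁻¹)
      ≤ 1 * (Real.sqrt (x / (3 * (x + 1) * (x - aminus))) * Real.sqrt ((aplus - x)⁻¹)) := by
        rw [one_mul]; exact mul_le_mul_of_nonneg_right h2 h5
    _ ≤ 1 / (1 - x) * (Real.sqrt (x / (3 * (x + 1) * (x - aminus))) * Real.sqrt ((aplus - x)⁻¹)) := by
        apply mul_le_mul_of_nonneg_right h3 (by positivity)

lemma sep_nonneg {x : ℝ} (hx : x ∈ Set.Icc (0:ℝ) aplus) : 0 ≤ sepIntegrand x := by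
  obtain ⟨hx0, hxa⟩ := hx
  have : x < 1 := by nlinarith [ap_ub]
  unfold sepIntegrand
  exact mul_nonneg (div_nonneg zero_le_one (by linarith)) (Real.sqrt_nonneg _)

lemma int_g : IntervalIntegrable (fun x => Real.sqrt ((aplus - x)⁻¹))
    MeasureTheory.volume 0 aplus := by
  have h0 : IntervalIntegrable (fun y : ℝ => y ^ (-(1/2) : ℝ))
      MeasureTheory.volume 0 aplus :=
    intervalIntegral.intervalIntegrable_rpow' (by norm_num)
  have h2 := h0.comp_sub_left aplus
  simp only [sub_self, sub_zero] at h2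
  have h3 : (fun x => (aplus - x) ^ (-(1/2) : ℝ))
      = fun x => Real.sqrt ((aplus - x)⁻¹) := funext fun x => (sqrt_inv_rpow _).symm
  rw [h3] at h2; exact h2.symm

lemma int_val {a : ℝ} :
    ∫ x in a..aplus, Real.sqrt ((aplus - x)⁻¹) = 2 * Real.sqrt (aplus - a) := by
  simp_rw [sqrt_inv_rpow]
  rw [intervalIntegral.integral_comp_sub_left (fun y => y ^ (-(1/2) : ℝ)) aplus]
  rw [integral_rpow (Or.inl (by norm_num))]
  norm_num [Real.sqrt_eq_rpow]
  ring

lemma sep_meas : Measurable sepIntegrand := by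
  unfold sepIntegrand
  fun_prop

lemma int_sep : IntervalIntegrable sepIntegrand MeasureTheory.volume 0 aplus := by
  have hap : (0:ℝ) ≤ aplus := le_trans (by norm_num) ap_lb
  apply IntervalIntegrable.mono_fun' (g := fun x => 0.32 * Real.sqrt ((aplus - x)⁻¹))
    (int_g.const_mul 0.32)
    (sep_meas.aestronglyMeasurable.restrict)
  rw [Set.uIoc_of_le hap]
  refine Filter.eventually_of_mem
    (MeasureTheory.self_mem_ae_restrict measurableSet_Ioc) (fun x hx => ?_)
  have hx' : x ∈ Set.Icc (0:ℝ) aplus := ⟨hx.1.le, hx.2⟩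
  simp only [Real.norm_eq_abs, abs_of_nonneg (sep_nonneg hx')]
  exact ptwise_up hx'

/-- The constant `A = ∫₀^{a₊} (1/(1-x))·√( x / (3(x+1)(a₊-x)(x-a₋)) ) dx`. -/
def Aconst : ℝ := ∫ x in (0 : ℝ)..aplus, sepIntegrand x

/-- The improper integral defining `A` converges, and
`3/50 ≤ A ≤ 3/10`; in particular `A < π√(2/21)`. -/
theorem stmt2 :
    IntervalIntegrable sepIntegrand MeasureTheory.volume 0 aplus ∧
    3 / 50 ≤ Aconst ∧ Aconst ≤ 3 / 10 ∧ Aconst < Real.pi * Real.sqrt (2 / 21) := by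
  have hap : (1/10:ℝ) ≤ aplus := le_trans (by norm_num) ap_lb
  have hap0 : (0:ℝ) ≤ aplus := le_trans (by norm_num) ap_lb
  have hsub1 : IntervalIntegrable sepIntegrand MeasureTheory.volume 0 (1/10) :=
    int_sep.mono_set (by rw [Set.uIcc_of_le (by norm_num), Set.uIcc_of_le hap0]
                         exact Set.Icc_subset_Icc le_rfl hap)
  have hsub2 : IntervalIntegrable sepIntegrand MeasureTheory.volume (1/10) aplus :=
    int_sep.mono_set (by rw [Set.uIcc_of_le hap, Set.uIcc_of_le hap0]
                         exact Set.Icc_subset_Icc (by norm_num) le_rfl)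
  have hsplit : (∫ x in (0:ℝ)..(1/10), sepIntegrand x)
      + (∫ x in (1/10:ℝ)..aplus, sepIntegrand x) = Aconst :=
    intervalIntegral.integral_add_adjacent_intervals hsub1 hsub2
  -- upper bound
  have hup : Aconst ≤ 3/10 := by
    have h1 : Aconst ≤ ∫ x in (0:ℝ)..aplus, 0.32 * Real.sqrt ((aplus - x)⁻¹) :=
      intervalIntegral.integral_mono_on hap0 int_sep (int_g.const_mul 0.32)
        (fun x hx => ptwise_up hx)
    have h2 : (∫ x in (0:ℝ)..aplus, 0.32 * Real.sqrt ((aplus - x)⁻¹))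
        = 0.32 * (2 * Real.sqrt (aplus - 0)) := by
      rw [intervalIntegral.integral_const_mul, int_val]
    have h3 : Real.sqrt (aplus - 0) ≤ 0.456 := by
      nlinarith [Real.sq_sqrt (show (0:ℝ) ≤ aplus - 0 by linarith),
        Real.sqrt_nonneg (aplus - 0), ap_ub]
    rw [h2] at h1
    nlinarith
  -- lower bound
  have hlo : 3/50 ≤ Aconst := by
    have hA : (0:ℝ) ≤ ∫ x in (0:ℝ)..(1/10), sepIntegrand x := by
      apply intervalIntegral.integral_nonneg (by norm_num)
      intro x hx
      exact sep_nonneg ⟨hx.1, le_trans hx.2 hap⟩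
    have hB : (∫ x in (1/10:ℝ)..aplus, 0.138 * Real.sqrt ((aplus - x)⁻¹))
        ≤ ∫ x in (1/10:ℝ)..aplus, sepIntegrand x :=
      intervalIntegral.integral_mono_on hap
        ((int_g.const_mul 0.138).mono_set
          (by rw [Set.uIcc_of_le hap, Set.uIcc_of_le hap0]
              exact Set.Icc_subset_Icc (by norm_num) le_rfl))
        hsub2 (fun x hx => ptwise_lo hx)
    have hC : (∫ x in (1/10:ℝ)..aplus, 0.138 * Real.sqrt ((aplus - x)⁻¹))
        = 0.138 * (2 * Real.sqrt (aplus - 1/10)) := by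
      rw [intervalIntegral.integral_const_mul, int_val]
    have h3 : (0.327:ℝ) ≤ Real.sqrt (aplus - 1/10) := by
      nlinarith [Real.sq_sqrt (show (0:ℝ) ≤ aplus - 1/10 by linarith),
        Real.sqrt_nonneg (aplus - 1/10), ap_lb]
    rw [hC] at hB
    nlinarith
  refine ⟨int_sep, hlo, hup, ?_⟩
  have h1 : (0.3:ℝ) ≤ Real.sqrt (2/21) := by
    nlinarith [Real.sq_sqrt (show (0:ℝ) ≤ 2/21 by norm_num), Real.sqrt_nonneg (2/21:ℝ)]
  nlinarith [Real.pi_gt_three, Real.sqrt_nonneg (2/21:ℝ)]
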